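/- Let K be a field of characteristic ≠ 2,3, A an integrally closed subring of K with fraction field K, B a free cubic A-algebra whose fraction field L is a cubic separable extension of K with disc(L/K) ≠ 0. Then for any A-basis B of B, the projective plane curve C_B : I_B(X,Y) = Z³ is smooth. -/

import Mathlib

open Polynomial

private lemma linRoot {K F : Type*} [Field K] [Field F] (φ : K →+* F) {p : K[X]}
    (hp : p.natDegree = 1) {t : F} (h : (p.map φ).eval t = 0) : ∃ s : K, φ s = t := by
  have h1 : p.coeff 1 ≠ 0 := by
    intro h0
    have hpne : p ≠ 0 := fun hz => by rw [hz] at hp; simp at hp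
    have := Polynomial.leadingCoeff_ne_zero.mpr hpne
    rw [Polynomial.leadingCoeff, hp] at this
    exact this h0
  have hrep := Polynomial.eq_X_add_C_of_natDegree_le_one (le_of_eq hp)
  rw [hrep] at h
  simp only [Polynomial.map_add, Polynomial.map_mul, Polynomial.map_C, Polynomial.map_X,
    Polynomial.eval_add, Polynomial.eval_mul, Polynomial.eval_C, Polynomial.eval_X] at h
  refine ⟨-(p.coeff 0) / (p.coeff 1), ?_⟩
  have h1' : φ (p.coeff 1) ≠ 0 := by
    simpa using fun hz => h1 (φ.injective (by simpa using hz))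
  rw [map_div₀, map_neg]
  field_simp
  linear_combination -h

private lemma cubicDoubleRootRat {K F : Type*} [Field K] [Field F] (φ : K →+* F)
    (h2 : (2 : K) ≠ 0) (h3 : (3 : K) ≠ 0) (a b c d : K) (ha : a ≠ 0) (t : F)
    (h0 : φ a * t ^ 3 + φ b * t ^ 2 + φ c * t + φ d = 0)
    (h1 : 3 * φ a * t ^ 2 + 2 * φ b * t + φ c = 0) :
    ∃ s : K, φ s = t ∧ a * s ^ 3 + b * s ^ 2 + c * s + d = 0 := by
  classical
  set f : K[X] := C a * X ^ 3 + C b * X ^ 2 + C c * X + C d with hfdef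
  have hfd : f.natDegree = 3 := Polynomial.natDegree_cubic ha
  have hfne : f ≠ 0 := fun h => by simp [h] at hfd
  have h3a : 3 * a ≠ 0 := mul_ne_zero (by exact_mod_cast h3) ha
  have hder : derivative f = C (3 * a) * X ^ 2 + C (2 * b) * X + C c := by
    simp [hfdef]
    rw [map_ofNat C 2, map_ofNat C 3]
    ring
  have hf'd : (derivative f).natDegree = 2 := by
    rw [hder]; exact Polynomial.natDegree_quadratic h3a
  have hf'ne : derivative f ≠ 0 := fun h => by simp [h] at hf'd
  -- roots of mapped polys
  have hroot0 : (f.map φ).eval t = 0 := by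
    simp only [hfdef, Polynomial.map_add, Polynomial.map_mul, Polynomial.map_C,
      Polynomial.map_pow, Polynomial.map_X, Polynomial.eval_add, Polynomial.eval_mul,
      Polynomial.eval_C, Polynomial.eval_pow, Polynomial.eval_X]
    exact h0
  have hroot1 : ((derivative f).map φ).eval t = 0 := by
    rw [hder]
    simp only [Polynomial.map_add, Polynomial.map_mul, Polynomial.map_C,
      Polynomial.map_pow, Polynomial.map_X, Polynomial.eval_add, Polynomial.eval_mul,
      Polynomial.eval_C, Polynomial.eval_pow, Polynomial.eval_X]
    rw [map_mul, map_mul]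
    push_cast [map_ofNat]
    linear_combination h1
  set g : K[X] := EuclideanDomain.gcd f (derivative f) with hgdef
  have hg0 : g ≠ 0 := by
    intro h
    exact hfne ((EuclideanDomain.gcd_eq_zero_iff).mp h).1
  have hgroot : (g.map φ).eval t = 0 := by
    have d1 : (X - C t) ∣ f.map φ := Polynomial.dvd_iff_isRoot.mpr hroot0
    have d2 : (X - C t) ∣ (derivative f).map φ := Polynomial.dvd_iff_isRoot.mpr hroot1
    have : (X - C t) ∣ g.map φ := by
      rw [hgdef, ← Polynomial.gcd_map]
      exact EuclideanDomain.dvd_gcd d1 d2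
    exact Polynomial.dvd_iff_isRoot.mp this
  have hgle : g.natDegree ≤ 2 := by
    have := Polynomial.natDegree_le_of_dvd (EuclideanDomain.gcd_dvd_right f (derivative f)) hf'ne
    rw [← hgdef] at this
    omega
  -- the key: find s with φ s = t
  have hst : ∃ s : K, φ s = t := by
    rcases (show g.natDegree = 0 ∨ g.natDegree = 1 ∨ g.natDegree = 2 by omega) with hg | hg | hg
    · exfalso
      have hgc := Polynomial.eq_C_of_natDegree_eq_zero hg
      rw [hgc] at hgroot
      simp only [Polynomial.map_C, Polynomial.eval_C] at hgroot
      have : g.coeff 0 = 0 := φ.injective (by simpa using hgroot)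
      exact hg0 (by rw [hgc, this, map_zero])
    · exact linRoot φ hg hgroot
    · obtain ⟨q, hq⟩ := EuclideanDomain.gcd_dvd_left f (derivative f)
      have hqne : q ≠ 0 := fun h => hfne (by rw [hq, h, mul_zero])
      have hqd : q.natDegree = 1 := by
        have := Polynomial.natDegree_mul hg0 hqne
        rw [← hq, hfd, hg] at this
        omega
      have hgc2 : g.coeff 2 ≠ 0 := by
        have := Polynomial.leadingCoeff_ne_zero.mpr hg0
        rwa [Polynomial.leadingCoeff, hg] at this
      have hg'd : (derivative g).natDegree = 1 := by
        have hle : (derivative g).natDegree ≤ 1 := by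
          have := Polynomial.natDegree_derivative_le g
          omega
        have hc : (derivative g).coeff 1 ≠ 0 := by
          rw [Polynomial.coeff_derivative]
          exact mul_ne_zero hgc2 (by rw [show ((1:ℕ):K)+1 = 2 by norm_num]; exact h2)
        have := Polynomial.le_natDegree_of_ne_zero hc
        omega
      -- derivative f = derivative g * q + g * derivative q
      have hderiv : derivative f = derivative g * q + g * derivative q := by
        rw [hq, Polynomial.derivative_mul]
      have hprod : ((derivative g).map φ).eval t * (q.map φ).eval t = 0 := by
        have := congrArg (fun p => (p.map φ).eval t) hderiv
        simp only [Polynomial.map_add, Polynomial.map_mul, Polynomial.eval_add,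
          Polynomial.eval_mul] at this
        rw [hroot1] at this
        rw [hgroot] at this
        linear_combination -this
      rcases mul_eq_zero.mp hprod with h | h
      · exact linRoot φ hg'd h
      · exact linRoot φ hqd h
  obtain ⟨s, hs⟩ := hst
  refine ⟨s, hs, ?_⟩
  have : φ (a * s ^ 3 + b * s ^ 2 + c * s + d) = 0 := by
    push_cast [map_add, map_mul, map_pow, hs]
    linear_combination h0
  exact φ.injective (by simpa using this)

private lemma detPow_ne_zero {K L : Type*} [Field K] [Field L] [Algebra K L]
    (hdeg : Module.finrank K L = 3) (β : Module.Basis (Fin 3) K L) (hβ0 : β 0 = 1)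
    (x y : K) (hxy : ¬(x = 0 ∧ y = 0)) :
    (Matrix.of fun i j : Fin 3 => β.repr ((x • β 1 + y • β 2) ^ (i : ℕ)) j).det ≠ 0 := by
  set θ := x • β 1 + y • β 2 with hθ
  have hfin : FiniteDimensional K L := Module.finite_of_finrank_pos (by rw [hdeg]; norm_num)
  have hint : IsIntegral K θ := IsIntegral.of_finite K θ
  have hnr : θ ∉ (algebraMap K L).range := by
    rintro ⟨k, hk⟩
    have hk' : k • β 0 = x • β 1 + y • β 2 := by
      rw [hβ0, ← Algebra.algebraMap_eq_smul_one, hk]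
    apply hxy
    constructor
    · have := congrArg (fun w => β.repr w 1) hk'
      simpa [Module.Basis.repr_self, Finsupp.single_apply] using this.symm
    · have := congrArg (fun w => β.repr w 2) hk'
      simpa [Module.Basis.repr_self, Finsupp.single_apply] using this.symm
  have hd3 : (minpoly K θ).natDegree = 3 := by
    have hdvd : (minpoly K θ).natDegree ∣ 3 := hdeg ▸ minpoly.degree_dvd hint
    rcases (Nat.Prime.eq_one_or_self_of_dvd (by norm_num) _ hdvd) with h | h
    · exact absurd (minpoly.natDegree_eq_one_iff.mp h) hnr
    · exact h
  have li : LinearIndependent K fun i : Fin 3 => θ ^ (i : ℕ) := by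
    have := linearIndependent_pow (K := K) θ
    rwa [hd3] at this
  have li2 : LinearIndependent K
      fun i => (Matrix.of fun i j : Fin 3 => β.repr (θ ^ (i : ℕ)) j) i := by
    have := li.map' β.equivFun.toLinearMap β.equivFun.ker
    exact this
  have hu : IsUnit (Matrix.of fun i j : Fin 3 => β.repr (θ ^ (i : ℕ)) j) :=
    Matrix.linearIndependent_rows_iff_isUnit.mp li2
  exact ((Matrix.isUnit_iff_isUnit_det _).mp hu).ne_zero

/-- Let `K` be a field of characteristic `≠ 2,3`, `A` an integrally closed
(Dedekind) subring with fraction field `K`, and `B` a free cubic `A`-algebra whose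
fraction field `L` is a cubic separable extension of `K` with `disc(L/K) ≠ 0`.
For any `A`-basis `{1, ω₂, ω₃}` of `B`, with index form
`I(X,Y) = aX³ + bX²Y + cXY² + dY³`, the projective plane curve
`C : I(X,Y) = Z³` is smooth: over an algebraic closure of `K`, the polynomial
`g = I(X,Y) − Z³` and its partial derivatives have no common nontrivial zero. -/
theorem indexForm_cubic_curve_smooth
    (A B K L : Type*) [CommRing A] [IsDedekindDomain A]
    [CommRing B] [IsDomain B] [IsIntegrallyClosed B]
    [Field K] [Field L]
    [Algebra A B] [Algebra A K] [IsFractionRing A K]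
    [Algebra B L] [IsFractionRing B L]
    [Algebra K L] [Algebra A L] [IsScalarTower A K L] [IsScalarTower A B L]
    (h2 : (2 : K) ≠ 0) (h3 : (3 : K) ≠ 0)
    (hdeg : Module.finrank K L = 3) [Algebra.IsSeparable K L]
    (ω : Module.Basis (Fin 3) A B) (hω : ω 0 = 1)
    (β : Module.Basis (Fin 3) K L) (hβ : ∀ i, β i = algebraMap B L (ω i))
    (hdisc : Algebra.discr K ⇑β ≠ 0)
    (a b c d : K)
    (habcd : ∀ x y : K,
      (Matrix.of fun i j : Fin 3 =>
          β.repr ((x • β 1 + y • β 2) ^ (i : ℕ)) j).det =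
        a * x ^ 3 + b * x ^ 2 * y + c * x * y ^ 2 + d * y ^ 3) :
    ∀ x y z : AlgebraicClosure K, ¬(x = 0 ∧ y = 0 ∧ z = 0) →
      ¬(algebraMap K (AlgebraicClosure K) a * x ^ 3
            + algebraMap K (AlgebraicClosure K) b * x ^ 2 * y
            + algebraMap K (AlgebraicClosure K) c * x * y ^ 2
            + algebraMap K (AlgebraicClosure K) d * y ^ 3 - z ^ 3 = 0 ∧
        3 * algebraMap K (AlgebraicClosure K) a * x ^ 2
            + 2 * algebraMap K (AlgebraicClosure K) b * x * y
            + algebraMap K (AlgebraicClosure K) c * y ^ 2 = 0 ∧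
        algebraMap K (AlgebraicClosure K) b * x ^ 2
            + 2 * algebraMap K (AlgebraicClosure K) c * x * y
            + 3 * algebraMap K (AlgebraicClosure K) d * y ^ 2 = 0 ∧
        3 * z ^ 2 = 0) := by
  intro x y z hxyz hcond
  obtain ⟨e1, e2, e3, e4⟩ := hcond
  set φ := algebraMap K (AlgebraicClosure K) with hφ
  have hβ0 : β 0 = 1 := by rw [hβ 0, hω, map_one]
  have key : ∀ u v : K, ¬(u = 0 ∧ v = 0) →
      a * u ^ 3 + b * u ^ 2 * v + c * u * v ^ 2 + d * v ^ 3 ≠ 0 := by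
    intro u v huv
    rw [← habcd u v]
    exact detPow_ne_zero hdeg β hβ0 u v huv
  have hinj : Function.Injective φ := φ.injective
  have h3F : (3 : AlgebraicClosure K) ≠ 0 := by
    intro h
    exact h3 (hinj (by rw [map_ofNat, map_zero, h]))
  have hz : z = 0 := by
    have hz2 : z ^ 2 = 0 := (mul_eq_zero.mp e4).resolve_left h3F
    exact pow_eq_zero_iff (by norm_num) |>.mp hz2
  subst hz
  have ha : a ≠ 0 := by
    intro h
    apply key 1 0 (by simp)
    rw [h]; ring
  have haF : φ a ≠ 0 := fun h => ha (hinj (by rw [h, map_zero]))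
  have hy : y ≠ 0 := by
    intro hy0
    subst hy0
    have e2' : 3 * φ a * x ^ 2 = 0 := by linear_combination e2
    have hx : x = 0 := by
      have := (mul_eq_zero.mp e2').resolve_left (mul_ne_zero h3F haF)
      exact pow_eq_zero_iff (by norm_num) |>.mp this
    exact hxyz ⟨hx, rfl, rfl⟩
  have root0 : φ a * (x / y) ^ 3 + φ b * (x / y) ^ 2 + φ c * (x / y) + φ d = 0 := by
    field_simp
    linear_combination e1
  have root1 : 3 * φ a * (x / y) ^ 2 + 2 * φ b * (x / y) + φ c = 0 := by
    field_simp
    linear_combination e2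
  obtain ⟨s, hs, hsroot⟩ := cubicDoubleRootRat φ h2 h3 a b c d ha (x / y) root0 root1
  exact key s 1 (by simp) (by linear_combination hsroot)
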